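/- Let K ⊆ ℝ^d be compact and let ℓ, L ≥ 1. Every f ∈ W^L(K) belongs to W^{ℓ+L}(K), and ‖f‖_{W^{ℓ+L}(K)} ≤ 2 ‖f‖_{W^L(K)}. -/

import Mathlib

open MeasureTheory Set Filter Topology
open scoped ENNReal NNReal Classical

noncomputable section

/-- The rectified linear unit. -/
def relu (z : ℝ) : ℝ := max z 0

/-- The Borel σ-algebra on `C(K, ℝ)` for the topology of uniform convergence
(= compact-open topology for compact `K`). -/
instance ctsMeasurableSpace {d : ℕ} (K : Set (Fin d → ℝ)) : MeasurableSpace C(K, ℝ) := borel _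

/-- `(μp, μn)` is a (Jordan-decomposed) signed-measure representation of `f` over the
class `H ⊆ C(K, ℝ)`: both parts are finite measures concentrated on `H`, and
`f x = ∫ relu (g x) dμp - ∫ relu (g x) dμn` for every `x ∈ K`. -/
def IsBarronRep {d : ℕ} (K : Set (Fin d → ℝ)) (H : Set C(K, ℝ)) (f : C(K, ℝ))
    (μp μn : Measure C(K, ℝ)) : Prop :=
  IsFiniteMeasure μp ∧ IsFiniteMeasure μn ∧ μp Hᶜ = 0 ∧ μn Hᶜ = 0 ∧
    ∀ x : K, f x = (∫ g : C(K, ℝ), relu (g x) ∂μp) - ∫ g : C(K, ℝ), relu (g x) ∂μn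

/-- The generalized Barron norm `‖f‖_{X,K}`, where `H` plays the role of the closed unit
ball `B^X` (realized inside `C(K,ℝ)`): the infimum of the total variation mass over all
signed-measure representations of `f`. -/
def barronNorm {d : ℕ} (K : Set (Fin d → ℝ)) (H : Set C(K, ℝ)) (f : C(K, ℝ)) : ℝ≥0∞ :=
  ⨅ p : {p : Measure C(K, ℝ) × Measure C(K, ℝ) // IsBarronRep K H f p.1 p.2},
    p.1.1 Set.univ + p.1.2 Set.univ

/-- The neural tree norm `‖·‖_{W^L(K)}`. For `L = 0` it is the norm `‖w‖_{ℓ¹} + |b|` of the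
space of affine functions `x ↦ wᵀx + b`; for `L ≥ 1`, `W^L(K) = B_{W^{L-1}(K), K}` is the
generalized Barron space modelled on `X = W^{L-1}(K)`, whose unit ball is
`{g : treeNorm K (L-1) g ≤ 1}`.  A continuous function `f` belongs to `W^L(K)` iff
`treeNorm K L f ≠ ∞`. -/
def treeNorm {d : ℕ} (K : Set (Fin d → ℝ)) : ℕ → C(K, ℝ) → ℝ≥0∞
  | 0, f =>
    ⨅ p : {p : (Fin d → ℝ) × ℝ //
        ∀ x : K, f x = (∑ i : Fin d, p.1 i * (x : Fin d → ℝ) i) + p.2},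
      ENNReal.ofReal ((∑ i : Fin d, |p.1.1 i|) + |p.1.2|)
  | (L + 1), f => barronNorm K {g : C(K, ℝ) | treeNorm K L g ≤ 1} f

end
set_option synthInstance.maxHeartbeats 1000000

section Aux

variable {d : ℕ} {K : Set (Fin d → ℝ)}

lemma relu_continuous : Continuous relu := continuous_id.max continuous_const

lemma relu_relu (t : ℝ) : relu (relu t) = relu t :=
  max_eq_left (le_max_right _ _)

lemma relu_sub_relu_neg (t : ℝ) : relu t - relu (-t) = t := by
  unfold relu
  rcases le_total t 0 with h | h
  · rw [max_eq_right h, max_eq_left (by linarith)]; ring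
  · rw [max_eq_left h, max_eq_right (by linarith)]; ring

instance : BorelSpace C(K, ℝ) := ⟨rfl⟩

instance : MeasurableSingletonClass C(K, ℝ) :=
  ⟨fun a => isClosed_singleton.measurableSet⟩

lemma eval_stronglyMeasurable (x : K) :
    StronglyMeasurable (fun g : C(K, ℝ) => relu (g x)) :=
  (relu_continuous.comp (continuous_eval_const x)).stronglyMeasurable

lemma barronNorm_le_of_rep {H : Set C(K, ℝ)} {f : C(K, ℝ)} {μp μn : Measure C(K, ℝ)}
    (h : IsBarronRep K H f μp μn) : barronNorm K H f ≤ μp Set.univ + μn Set.univ :=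
  iInf_le (fun p : {p : Measure C(K, ℝ) × Measure C(K, ℝ) // IsBarronRep K H f p.1 p.2} =>
    p.1.1 Set.univ + p.1.2 Set.univ) ⟨(μp, μn), h⟩

/-- Postcomposition with ReLU. -/
def reluComp (K : Set (Fin d → ℝ)) (g : C(K, ℝ)) : C(K, ℝ) :=
  ContinuousMap.comp ⟨relu, relu_continuous⟩ g

lemma reluComp_idem (g : C(K, ℝ)) : reluComp K (reluComp K g) = reluComp K g := by
  ext x; exact relu_relu (g x)

/-- A function in the unit ball of `W^L` composed with ReLU lies in the unit ball of
`W^{L+1}` (Dirac representation). -/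
lemma treeNorm_reluComp_le (L : ℕ) (g : C(K, ℝ)) (hg : treeNorm K L g ≤ 1) :
    treeNorm K (L + 1) (reluComp K g) ≤ 1 := by
  have hrep : IsBarronRep K {h : C(K, ℝ) | treeNorm K L h ≤ 1} (reluComp K g)
      (Measure.dirac g) 0 := by
    refine ⟨inferInstance, inferInstance, ?_, by simp, fun x => ?_⟩
    · rw [Measure.dirac_apply]
      simp [Set.indicator, hg]
    · rw [integral_dirac' _ _ (eval_stronglyMeasurable x)]
      simp [reluComp]
  calc treeNorm K (L + 1) (reluComp K g)
      ≤ Measure.dirac g Set.univ + (0 : Measure C(K, ℝ)) Set.univ :=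
        barronNorm_le_of_rep hrep
    _ ≤ 1 := by simp

lemma treeNorm_reluComp_le' (L m : ℕ) (g : C(K, ℝ)) (hg : treeNorm K L g ≤ 1) :
    treeNorm K (L + 1 + m) (reluComp K g) ≤ 1 := by
  induction m with
  | zero => exact treeNorm_reluComp_le L g hg
  | succ m ih =>
    have := treeNorm_reluComp_le (L + 1 + m) (reluComp K g) ih
    rwa [reluComp_idem] at this

lemma treeNorm_neg_le (L : ℕ) (g : C(K, ℝ)) :
    treeNorm K (L + 1) (-g) ≤ treeNorm K (L + 1) g := by
  show barronNorm K _ (-g) ≤ barronNorm K _ g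
  refine le_iInf fun p => ?_
  obtain ⟨⟨μp, μn⟩, h1, h2, h3, h4, h5⟩ := p
  have hrep : IsBarronRep K {h : C(K, ℝ) | treeNorm K L h ≤ 1} (-g) μn μp :=
    ⟨h2, h1, h4, h3, fun x => by
      simp only [ContinuousMap.neg_apply, h5 x]; ring⟩
  calc barronNorm K {h : C(K, ℝ) | treeNorm K L h ≤ 1} (-g)
      ≤ μn Set.univ + μp Set.univ := barronNorm_le_of_rep hrep
    _ = μp Set.univ + μn Set.univ := add_comm _ _

lemma treeNorm_smul_le (L : ℕ) (c : ℝ≥0) (f : C(K, ℝ)) :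
    treeNorm K (L + 1) ((c : ℝ) • f) ≤ (c : ℝ≥0∞) * treeNorm K (L + 1) f := by
  rcases eq_or_ne c 0 with rfl | hc
  · have hrep : IsBarronRep K {h : C(K, ℝ) | treeNorm K L h ≤ 1}
        ((0 : ℝ) • f) 0 0 := by
      refine ⟨inferInstance, inferInstance, by simp, by simp, fun x => by simp⟩
    have : treeNorm K (L + 1) ((0 : ℝ) • f)
        ≤ (0 : Measure C(K, ℝ)) Set.univ + (0 : Measure C(K, ℝ)) Set.univ :=
      barronNorm_le_of_rep hrep
    simpa using this
  · show barronNorm K _ _ ≤ _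
    rw [show ((c : ℝ≥0∞) * treeNorm K (L + 1) f) = ⨅ p : {p : Measure C(K, ℝ) ×
        Measure C(K, ℝ) // IsBarronRep K {h : C(K, ℝ) | treeNorm K L h ≤ 1} f p.1 p.2},
        (c : ℝ≥0∞) * (p.1.1 Set.univ + p.1.2 Set.univ) from
      ENNReal.mul_iInf_of_ne (by exact_mod_cast hc) (by simp)]
    refine le_iInf fun p => ?_
    obtain ⟨⟨μp, μn⟩, h1, h2, h3, h4, h5⟩ := p
    have h1' : IsFiniteMeasure (c • μp) := by exact isFiniteMeasureSMulNNReal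
    have h2' : IsFiniteMeasure (c • μn) := by exact isFiniteMeasureSMulNNReal
    have hrep : IsBarronRep K {h : C(K, ℝ) | treeNorm K L h ≤ 1}
        ((c : ℝ) • f) (c • μp) (c • μn) := by
      refine ⟨h1', h2', ?_, ?_, fun x => ?_⟩
      · simp [Measure.smul_apply, h3]
      · simp [Measure.smul_apply, h4]
      · rw [ENNReal.smul_def, ENNReal.smul_def, integral_smul_measure,
          integral_smul_measure]
        simp only [ContinuousMap.smul_apply, h5 x, smul_eq_mul, ENNReal.coe_toReal]
        ring
    calc barronNorm K {h : C(K, ℝ) | treeNorm K L h ≤ 1} ((c : ℝ) • f)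
        ≤ (c • μp) Set.univ + (c • μn) Set.univ := barronNorm_le_of_rep hrep
      _ = (c : ℝ≥0∞) * (μp Set.univ + μn Set.univ) := by
          rw [Measure.smul_apply, Measure.smul_apply, ENNReal.smul_def, ENNReal.smul_def,
            smul_eq_mul, smul_eq_mul, mul_add]

end Aux

section Aux2

variable {d : ℕ} {K : Set (Fin d → ℝ)}

lemma exists_pair (m L' : ℕ) (g : C(K, ℝ)) (hg : treeNorm K (L' + 1) g ≤ 1) :
    ∃ gp gn : C(K, ℝ), treeNorm K (L' + 1 + m) gp ≤ 1 ∧ treeNorm K (L' + 1 + m) gn ≤ 1 ∧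
      ∀ x : K, relu (gp x) - relu (gn x) = g x := by
  have hneg : treeNorm K (L' + 1) (-g) ≤ 1 := (treeNorm_neg_le L' g).trans hg
  rcases m with _ | m
  · exact ⟨g, -g, hg, hneg, fun x => by
      simpa using relu_sub_relu_neg (g x)⟩
  · refine ⟨reluComp K g, reluComp K (-g), ?_, ?_, fun x => ?_⟩
    · have := treeNorm_reluComp_le' (L' + 1) m g hg
      convert this using 2; omega
    · have := treeNorm_reluComp_le' (L' + 1) m (-g) hneg
      convert this using 2; omega
    · show relu (relu (g x)) - relu (relu ((-g) x)) = g x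
      rw [relu_relu, relu_relu]
      simpa using relu_sub_relu_neg (g x)

lemma main_bound (ℓ' L' : ℕ) (f : C(K, ℝ)) (r : ℝ≥0) (hr : 0 < r)
    (hA : treeNorm K (L' + 1) f ≤ (r : ℝ≥0∞)) :
    treeNorm K (L' + 1 + ℓ' + 1) f ≤ 2 * r := by
  set g : C(K, ℝ) := ((r⁻¹ : ℝ≥0) : ℝ) • f with hgdef
  have hrne : (r : ℝ≥0∞) ≠ 0 := by exact_mod_cast hr.ne'
  have hg : treeNorm K (L' + 1) g ≤ 1 := by
    calc treeNorm K (L' + 1) g ≤ ((r⁻¹ : ℝ≥0) : ℝ≥0∞) * treeNorm K (L' + 1) f :=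
          treeNorm_smul_le L' r⁻¹ f
      _ ≤ ((r⁻¹ : ℝ≥0) : ℝ≥0∞) * (r : ℝ≥0∞) := by
          gcongr
      _ = 1 := by
          rw [ENNReal.coe_inv hr.ne']
          exact ENNReal.inv_mul_cancel hrne ENNReal.coe_ne_top
  obtain ⟨gp, gn, hgp, hgn, hrel⟩ := exists_pair ℓ' L' g hg
  have hrep : IsBarronRep K {h : C(K, ℝ) | treeNorm K (L' + 1 + ℓ') h ≤ 1} f
      (r • Measure.dirac gp) (r • Measure.dirac gn) := by
    refine ⟨isFiniteMeasureSMulNNReal, isFiniteMeasureSMulNNReal, ?_, ?_, fun x => ?_⟩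
    · rw [Measure.smul_apply, Measure.dirac_apply]
      simp [Set.indicator, hgp]
    · rw [Measure.smul_apply, Measure.dirac_apply]
      simp [Set.indicator, hgn]
    · rw [ENNReal.smul_def, ENNReal.smul_def, integral_smul_measure, integral_smul_measure,
        integral_dirac' _ _ (eval_stronglyMeasurable x),
        integral_dirac' _ _ (eval_stronglyMeasurable x)]
      have hfx : f x = (r : ℝ) * g x := by
        simp only [hgdef, ContinuousMap.smul_apply, smul_eq_mul]
        rw [NNReal.coe_inv, ← mul_assoc, mul_inv_cancel₀ (NNReal.coe_ne_zero.mpr hr.ne'), one_mul]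
      rw [hfx, ← hrel x]
      simp only [smul_eq_mul, ENNReal.coe_toReal]
      ring
  have hle : treeNorm K (L' + 1 + ℓ' + 1) f
      ≤ (r • Measure.dirac gp) Set.univ + (r • Measure.dirac gn) Set.univ :=
    barronNorm_le_of_rep hrep
  refine hle.trans ?_
  rw [Measure.smul_apply, Measure.smul_apply]
  simp [ENNReal.smul_def, two_mul]

end Aux2

/-- For `ℓ, L ≥ 1` and compact `K ⊆ ℝ^d`, every `f ∈ W^L(K)` belongs to
`W^{ℓ+L}(K)` and `‖f‖_{W^{ℓ+L}(K)} ≤ 2‖f‖_{W^L(K)}`. -/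
theorem treeSpace_monotone_in_depth {d : ℕ} (K : Set (Fin d → ℝ)) (hK : IsCompact K)
    (ℓ L : ℕ) (hℓ : 1 ≤ ℓ) (hL : 1 ≤ L) (f : C(K, ℝ)) (hf : treeNorm K L f ≠ ⊤) :
    treeNorm K (ℓ + L) f ≤ 2 * treeNorm K L f := by
  obtain ⟨L', rfl⟩ : ∃ L', L = L' + 1 := ⟨L - 1, by omega⟩
  obtain ⟨ℓ', rfl⟩ : ∃ ℓ', ℓ = ℓ' + 1 := ⟨ℓ - 1, by omega⟩
  set A := treeNorm K (L' + 1) f with hA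
  refine ENNReal.le_of_forall_pos_le_add fun ε hε h2A => ?_
  set r : ℝ≥0 := A.toNNReal + ε / 2 with hrdef
  have hAr : A ≤ (r : ℝ≥0∞) := by
    rw [hrdef, ENNReal.coe_add]
    calc A = A.toNNReal := (ENNReal.coe_toNNReal hf).symm
      _ ≤ _ := le_self_add
  have hrpos : 0 < r := by
    have : (0 : ℝ≥0) < ε / 2 := by positivity
    exact lt_of_lt_of_le this le_add_self
  have hmain : treeNorm K (L' + 1 + ℓ' + 1) f ≤ 2 * r := main_bound ℓ' L' f r hrpos hAr
  have harith : ℓ' + 1 + (L' + 1) = L' + 1 + ℓ' + 1 := by omega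
  rw [harith]
  refine hmain.trans ?_
  rw [hrdef, ENNReal.coe_add, mul_add, ENNReal.coe_toNNReal hf]
  gcongr
  rw [show (ε : ℝ≥0∞) = ((2 : ℝ≥0) : ℝ≥0∞) * ((ε / 2 : ℝ≥0) : ℝ≥0∞) by
    rw [← ENNReal.coe_mul]; congr 1; field_simp]
  gcongr
  norm_num
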